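/- For all r, s ∈ ℕ, a(r,s,0) = (r+1)·(r+s+1)^(s-1), where a(r,s,0) is the number of assignments of s drivers to r+s spaces such that all drivers park successfully (so s spaces are occupied and r remain empty). (For s = 0 interpret the formula as 1 when r+s+1 > 0, i.e., (r+1)·(r+1)^(-1) = 1.) -/

import Mathlib

open Finset

/-- One step of the linear parking process: the driver with choice `c` takes the
first free space with index at least `c`, if any; otherwise the failure count increases. -/
def parkStep {n : ℕ} (p : Finset (Fin n) × ℕ) (c : Fin n) : Finset (Fin n) × ℕ :=
  if h : ((Finset.univ \ p.1).filter (fun x => c ≤ x)).Nonempty then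
    (insert (((Finset.univ \ p.1).filter (fun x => c ≤ x)).min' h) p.1, p.2)
  else
    (p.1, p.2 + 1)

/-- The set of occupied spaces and the number of drivers who fail to park,
when drivers `0, 1, ..., m-1` with choices `f 0, f 1, ..., f (m-1)` arrive in order. -/
def parkRun {n m : ℕ} (f : Fin m → Fin n) : Finset (Fin n) × ℕ :=
  (List.ofFn f).foldl parkStep (∅, 0)

/-- The defect of an assignment: the number of drivers who fail to park. -/
def defect {n m : ℕ} (f : Fin m → Fin n) : ℕ := (parkRun f).2

/-- `cp n m k` is the number of assignments of `m` drivers to `n` spaces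
under which exactly `k` drivers fail to park. -/
def cp (n m k : ℕ) : ℕ :=
  (Finset.univ.filter (fun f : Fin m → Fin n => defect f = k)).card
namespace PFaux

open Fin.NatCast Fin.CommRing


lemma exists_free {N : ℕ} [NeZero N] (S : Finset (Fin N)) (h : S ≠ univ) (c : Fin N) :
    ∃ k : ℕ, c + (k : Fin N) ∉ S := by
  obtain ⟨x, hx⟩ : ∃ x, x ∉ S := by
    by_contra h'
    push_neg at h'
    exact h (eq_univ_iff_forall.mpr h')
  refine ⟨(x - c).val, ?_⟩
  rw [Fin.cast_val_eq_self]
  have : c + (x - c) = x := by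
    rw [add_comm, sub_add_cancel]
  rwa [this]

/-- One step of the *circular* parking process. -/
def cstep {N : ℕ} [NeZero N] (S : Finset (Fin N)) (c : Fin N) : Finset (Fin N) :=
  if h : S = univ then S
  else insert (c + ((Nat.find (exists_free S h c) : ℕ) : Fin N)) S

lemma subset_cstep {N : ℕ} [NeZero N] (S : Finset (Fin N)) (c : Fin N) : S ⊆ cstep S c := by
  unfold cstep
  split
  · exact subset_rfl
  · exact subset_insert _ _

lemma card_cstep {N : ℕ} [NeZero N] (S : Finset (Fin N)) (c : Fin N) (h : S.card < N) :
    (cstep S c).card = S.card + 1 := by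
  have hne : S ≠ univ := by
    intro he; rw [he, card_univ, Fintype.card_fin] at h; omega
  rw [cstep, dif_neg hne, card_insert_of_notMem (Nat.find_spec (exists_free S hne c))]

lemma self_mem_cstep {N : ℕ} [NeZero N] (S : Finset (Fin N)) (c : Fin N) : c ∈ cstep S c := by
  unfold cstep
  split
  · next h => rw [h]; exact mem_univ c
  · next h =>
    by_cases hc : c ∈ S
    · exact mem_insert_of_mem hc
    · have h0 : c + ((0 : ℕ) : Fin N) ∉ S := by simpa using hc
      have : Nat.find (exists_free S h c) = 0 := Nat.le_zero.mp (Nat.find_min' _ h0)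
      rw [this]
      simpa using mem_insert_self _ _

lemma subset_foldl_cstep {N : ℕ} [NeZero N] (l : List (Fin N)) (S : Finset (Fin N)) :
    S ⊆ l.foldl cstep S := by
  induction l generalizing S with
  | nil => exact subset_rfl
  | cons a t ih => exact (subset_cstep S a).trans (ih _)

lemma mem_foldl_cstep {N : ℕ} [NeZero N] (l : List (Fin N)) (S : Finset (Fin N)) (c : Fin N)
    (hc : c ∈ l) : c ∈ l.foldl cstep S := by
  induction l generalizing S with
  | nil => simp at hc
  | cons a t ih =>
    rcases List.mem_cons.mp hc with h | h
    · subst h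
      exact subset_foldl_cstep t _ (self_mem_cstep S c)
    · exact ih _ h

lemma card_foldl_cstep {N : ℕ} [NeZero N] (l : List (Fin N)) (S : Finset (Fin N))
    (h : S.card + l.length ≤ N) : (l.foldl cstep S).card = S.card + l.length := by
  induction l generalizing S with
  | nil => simp
  | cons a t ih =>
    simp only [List.length_cons] at h
    have h1 : S.card < N := by omega
    have := ih (cstep S a) (by rw [card_cstep S a h1]; omega)
    rw [List.foldl_cons, this, card_cstep S a h1]
    simp only [List.length_cons]
    omega

/-- Rotation equivariance of one step. -/
lemma cstep_shift {N : ℕ} [NeZero N] (S : Finset (Fin N)) (c d : Fin N) :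
    cstep (S.map (Equiv.addRight d).toEmbedding) (c + d)
      = (cstep S c).map (Equiv.addRight d).toEmbedding := by
  have hiff : ∀ x : Fin N, x + d ∈ S.map (Equiv.addRight d).toEmbedding ↔ x ∈ S := by
    intro x
    rw [mem_map_equiv]
    simp [Equiv.addRight]
  have huniv : S.map (Equiv.addRight d).toEmbedding = univ ↔ S = univ := by
    constructor
    · intro h
      apply eq_univ_iff_forall.mpr
      intro x
      rw [← hiff x, h]; exact mem_univ _
    · intro h; subst h; exact map_univ_equiv _
  unfold cstep
  by_cases h : S = univ
  · rw [dif_pos (huniv.mpr h), dif_pos h]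
  · rw [dif_neg (fun hh => h (huniv.mp hh)), dif_neg h]
    have hP : ∀ k : ℕ, (c + d + (k : Fin N) ∉ S.map (Equiv.addRight d).toEmbedding)
        ↔ (c + (k : Fin N) ∉ S) := by
      intro k
      have : c + d + (k : Fin N) = (c + (k : Fin N)) + d := by ring
      rw [this, hiff]
    have hfind : Nat.find (exists_free _ (fun hh => h (huniv.mp hh)) (c + d))
        = Nat.find (exists_free S h c) := by
      apply le_antisymm
      · exact Nat.find_min' _ ((hP _).mpr (Nat.find_spec (exists_free S h c)))
      · exact Nat.find_min' _ ((hP _).mp (Nat.find_spec (exists_free _ (fun hh => h (huniv.mp hh)) (c + d))))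
    rw [hfind, Finset.map_insert]
    congr 1
    simp [Equiv.addRight]
    ring

def crun {N m : ℕ} [NeZero N] (g : Fin m → Fin N) : Finset (Fin N) :=
  (List.ofFn g).foldl cstep ∅

lemma foldl_cstep_shift {N : ℕ} [NeZero N] (l : List (Fin N)) (S : Finset (Fin N)) (d : Fin N) :
    (l.map (· + d)).foldl cstep (S.map (Equiv.addRight d).toEmbedding)
      = (l.foldl cstep S).map (Equiv.addRight d).toEmbedding := by
  induction l generalizing S with
  | nil => simp
  | cons a t ih => rw [List.map_cons, List.foldl_cons, List.foldl_cons, cstep_shift, ih]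

lemma crun_shift {N m : ℕ} [NeZero N] (g : Fin m → Fin N) (d : Fin N) :
    crun (fun i => g i + d) = (crun g).map (Equiv.addRight d).toEmbedding := by
  have : List.ofFn (fun i => g i + d) = (List.ofFn g).map (· + d) := by
    rw [List.map_ofFn]; rfl
  have he : (∅ : Finset (Fin N)) = (∅ : Finset (Fin N)).map (Equiv.addRight d).toEmbedding :=
    (Finset.map_empty _).symm
  rw [crun, this, crun]
  conv_lhs => rw [he]
  rw [foldl_cstep_shift]

lemma card_crun {N m : ℕ} [NeZero N] (g : Fin m → Fin N) (h : m ≤ N) : (crun g).card = m := by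
  have := card_foldl_cstep (List.ofFn g) ∅ (by simpa using h)
  simpa [crun] using this


/-- Embedding of `Fin n` into `Fin (n+1)`. -/
def emb (n : ℕ) : Fin n ↪ Fin (n + 1) := ⟨Fin.castSucc, Fin.castSucc_injective n⟩

lemma last_not_mem_map {n : ℕ} (S : Finset (Fin n)) : Fin.last n ∉ S.map (emb n) := by
  intro h
  obtain ⟨x, -, hx⟩ := mem_map.mp h
  exact (Fin.castSucc_lt_last x).ne hx

lemma val_add_cast {n : ℕ} (c : Fin (n + 1)) (k : ℕ) (h : c.val + k ≤ n) :
    ((c + (k : Fin (n + 1))).val) = c.val + k := by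
  rw [Fin.val_add, Fin.val_natCast]
  rw [Nat.mod_eq_of_lt (show k < n + 1 by omega)]
  rw [Nat.mod_eq_of_lt (show c.val + k < n + 1 by omega)]

/-- The invariant linking the linear and circular processes. -/
def Inv {n : ℕ} (p : Finset (Fin n) × ℕ) (T : Finset (Fin (n + 1))) : Prop :=
  (p.2 = 0 ∧ T = p.1.map (emb n)) ∨ (p.2 ≠ 0 ∧ Fin.last n ∈ T)

lemma inv_step {n : ℕ} (p : Finset (Fin n) × ℕ) (T : Finset (Fin (n + 1))) (c : Fin n)
    (h : Inv p T) : Inv (parkStep p c) (cstep T c.castSucc) := by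
  rcases h with ⟨h0, hT⟩ | ⟨h0, hT⟩
  · -- synchronized case
    subst hT
    set S := p.1 with hS
    have hlast : Fin.last n ∉ S.map (emb n) := last_not_mem_map S
    have hne : S.map (emb n) ≠ univ := fun he => hlast (he ▸ mem_univ _)
    have hcv : (c.castSucc : Fin (n+1)).val = c.val := rfl
    have hcn : c.val < n := c.isLt
    -- the candidate at distance n - c.val is `last`
    have hPlast : c.castSucc + ((n - c.val : ℕ) : Fin (n + 1)) ∉ S.map (emb n) := by
      have hv : (c.castSucc + ((n - c.val : ℕ) : Fin (n + 1))).val = n := by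
        rw [val_add_cast _ _ (by omega)]; omega
      have : c.castSucc + ((n - c.val : ℕ) : Fin (n + 1)) = Fin.last n := Fin.ext hv
      rw [this]; exact hlast
    have hmem : ∀ x : Fin n, (emb n) x ∈ S.map (emb n) ↔ x ∈ S := fun x => mem_map' _
    by_cases hF : ((univ \ S).filter (fun x => c ≤ x)).Nonempty
    · -- linear success
      set x := ((univ \ S).filter (fun x => c ≤ x)).min' hF with hx
      have hxmem : x ∈ (univ \ S).filter (fun x => c ≤ x) := min'_mem _ _
      have hxS : x ∉ S := (mem_sdiff.mp (mem_filter.mp hxmem).1).2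
      have hcx : c ≤ x := (mem_filter.mp hxmem).2
      have hfind : Nat.find (exists_free _ hne c.castSucc) = x.val - c.val := by
        rw [Nat.find_eq_iff]
        constructor
        · have hv : (c.castSucc + ((x.val - c.val : ℕ) : Fin (n + 1))).val = x.val := by
            rw [val_add_cast _ _ (by omega)]; omega
          have : c.castSucc + ((x.val - c.val : ℕ) : Fin (n + 1)) = (emb n) x := Fin.ext hv
          rw [this, hmem]; exact hxS
        · intro k hk
          have hkv : c.val + k < n := by omega
          set y : Fin n := ⟨c.val + k, hkv⟩ with hy
          have hv : c.castSucc + ((k : ℕ) : Fin (n + 1)) = (emb n) y := by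
            apply Fin.ext
            rw [val_add_cast _ _ (by omega)]; rfl
          rw [hv, hmem, not_not]
          by_contra hyS
          have hymem : y ∈ (univ \ S).filter (fun x => c ≤ x) := by
            rw [mem_filter, mem_sdiff]
            exact ⟨⟨mem_univ _, hyS⟩, by simp [Fin.le_def, hy]⟩
          have := min'_le _ _ hymem
          rw [← hx] at this
          have := Fin.le_def.mp this
          simp [hy] at this
          omega
      have hspot : c.castSucc + ((Nat.find (exists_free _ hne c.castSucc) : ℕ) : Fin (n+1))
          = (emb n) x := by
        rw [hfind]
        apply Fin.ext
        rw [val_add_cast _ _ (by omega)]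
        have : ((emb n) x).val = x.val := rfl
        omega
      left
      rw [parkStep, dif_pos hF, cstep, dif_neg hne]
      refine ⟨h0, ?_⟩
      rw [hspot, ← Finset.map_insert]
    · -- linear failure: the circular driver takes the last spot
      have hfind : Nat.find (exists_free _ hne c.castSucc) = n - c.val := by
        rw [Nat.find_eq_iff]
        refine ⟨hPlast, ?_⟩
        intro k hk
        have hkv : c.val + k < n := by omega
        set y : Fin n := ⟨c.val + k, hkv⟩ with hy
        have hv : c.castSucc + ((k : ℕ) : Fin (n + 1)) = (emb n) y := by
          apply Fin.ext
          rw [val_add_cast _ _ (by omega)]; rfl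
        rw [hv, hmem, not_not]
        by_contra hyS
        exact hF ⟨y, by rw [mem_filter, mem_sdiff]; exact ⟨⟨mem_univ _, hyS⟩, by simp [Fin.le_def, hy]⟩⟩
      have hspot : c.castSucc + ((Nat.find (exists_free _ hne c.castSucc) : ℕ) : Fin (n+1))
          = Fin.last n := by
        rw [hfind]
        apply Fin.ext
        rw [val_add_cast _ _ (by omega)]
        simp only [Fin.val_last]
        omega
      right
      rw [parkStep, dif_neg hF, cstep, dif_neg hne]
      exact ⟨by simp, by rw [hspot]; exact mem_insert_self _ _⟩
  · -- already failed case
    right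
    constructor
    · rw [parkStep]
      split <;> simpa using h0
    · exact subset_cstep _ _ hT

lemma inv_foldl {n : ℕ} (l : List (Fin n)) (p : Finset (Fin n) × ℕ) (T : Finset (Fin (n + 1)))
    (h : Inv p T) : Inv (l.foldl parkStep p) ((l.map Fin.castSucc).foldl cstep T) := by
  induction l generalizing p T with
  | nil => exact h
  | cons a t ih => exact ih _ _ (inv_step p T a h)

lemma defect_eq_zero_iff {n m : ℕ} (f : Fin m → Fin n) :
    defect f = 0 ↔ Fin.last n ∉ crun (Fin.castSucc ∘ f) := by
  have h0 : Inv (∅, 0) (∅ : Finset (Fin (n + 1))) := Or.inl ⟨rfl, (map_empty _).symm⟩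
  have hof : List.ofFn (Fin.castSucc ∘ f) = (List.ofFn f).map Fin.castSucc :=
    (List.map_ofFn (f := f) (g := Fin.castSucc)).symm
  have key := inv_foldl (List.ofFn f) (∅, 0) ∅ h0
  rw [← hof] at key
  change Inv (parkRun f) (crun (Fin.castSucc ∘ f)) at key
  constructor
  · intro hd
    rcases key with ⟨_, hT⟩ | ⟨h1, _⟩
    · rw [hT]; exact last_not_mem_map _
    · exact absurd hd h1
  · intro hl
    rcases key with ⟨h1, _⟩ | ⟨_, hT⟩
    · exact h1
    · exact absurd hT hl


lemma mem_crun_shift {N m : ℕ} [NeZero N] (g : Fin m → Fin N) (d y : Fin N) :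
    y ∈ crun (fun x => g x + d) ↔ y - d ∈ crun g := by
  rw [crun_shift, mem_map_equiv]
  have : (Equiv.addRight d).symm y = y - d := by simp [Equiv.addRight, sub_eq_add_neg]
  rw [this]

lemma card_rot {n s : ℕ} (e : Fin (n + 1)) :
    (univ.filter fun g : Fin s → Fin (n + 1) => e ∉ crun g).card
      = (univ.filter fun g : Fin s → Fin (n + 1) => Fin.last n ∉ crun g).card := by
  set d := e - Fin.last n with hd
  refine card_bij' (fun g _ => fun x => g x - d) (fun g _ => fun x => g x + d) ?_ ?_ ?_ ?_
  · intro g hg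
    rw [mem_filter] at hg ⊢
    refine ⟨mem_univ _, ?_⟩
    show Fin.last n ∉ crun (fun x => g x - d)
    have h1 : (fun x => g x - d) = fun x => g x + (-d) := by
      funext x; rw [sub_eq_add_neg]
    rw [h1, mem_crun_shift]
    have h2 : Fin.last n - (-d) = e := by rw [hd]; abel
    rw [h2]
    exact hg.2
  · intro g hg
    rw [mem_filter] at hg ⊢
    refine ⟨mem_univ _, ?_⟩
    show e ∉ crun (fun x => g x + d)
    rw [mem_crun_shift]
    have h2 : e - d = Fin.last n := by rw [hd]; abel
    rw [h2]
    exact hg.2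
  · intro g hg; funext x; simp
  · intro g hg; funext x; simp

lemma ne_last_of_mem_A {n s : ℕ} (g : Fin s → Fin (n + 1))
    (hg : Fin.last n ∉ crun g) (i : Fin s) : g i ≠ Fin.last n := by
  intro he
  apply hg
  apply mem_foldl_cstep
  rw [List.mem_ofFn]
  exact ⟨i, he⟩

lemma cp_eq_A {n s : ℕ} :
    cp n s 0 = (univ.filter fun g : Fin s → Fin (n + 1) => Fin.last n ∉ crun g).card := by
  rw [cp]
  refine card_bij' (fun f _ => Fin.castSucc ∘ f)
    (fun g hg => fun i => (g i).castPred
      (ne_last_of_mem_A g (mem_filter.mp hg).2 i)) ?_ ?_ ?_ ?_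
  · intro f hf
    rw [mem_filter] at hf ⊢
    exact ⟨mem_univ _, (defect_eq_zero_iff f).mp hf.2⟩
  · intro g hg
    rw [mem_filter] at hg ⊢
    refine ⟨mem_univ _, ?_⟩
    rw [defect_eq_zero_iff]
    have : Fin.castSucc ∘ (fun i => (g i).castPred
        (ne_last_of_mem_A g hg.2 i)) = g := by
      funext i; exact Fin.castSucc_castPred _ _
    rw [this]
    exact hg.2
  · intro f hf; funext i; exact Fin.castPred_castSucc _
  · intro g hg; funext i; exact Fin.castSucc_castPred _ _

end PFaux

open PFaux in
/-- `a(r,s,0) = cp (r+s) s 0 = (r+1)·(r+s+1)^(s-1)`, with the `s = 0` case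
interpreted as `1`. -/
theorem stmt4 (r s : ℕ) :
    cp (r + s) s 0 = if s = 0 then 1 else (r + 1) * (r + s + 1) ^ (s - 1) := by
  rcases Nat.eq_zero_or_pos s with hs | hs
  · subst hs
    rw [if_pos rfl, cp]
    have h : ∀ f : Fin 0 → Fin (r + 0), defect f = 0 := by
      intro f
      simp [defect, parkRun, List.ofFn_zero]
    rw [Finset.filter_true_of_mem (fun f _ => h f), card_univ, Fintype.card_fun]
    simp
  · rw [if_neg hs.ne']
    set n := r + s with hn
    set A := univ.filter fun g : Fin s → Fin (n + 1) => Fin.last n ∉ crun g with hA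
    have hsum1 : ∑ e : Fin (n + 1),
        (univ.filter fun g : Fin s → Fin (n + 1) => e ∉ crun g).card
        = ∑ g : Fin s → Fin (n + 1), (univ \ crun g).card := by
      simp_rw [Finset.card_filter]
      rw [Finset.sum_comm]
      apply Finset.sum_congr rfl
      intro g _
      rw [Finset.sdiff_eq_filter, Finset.card_filter]
    have hcard : ∀ g : Fin s → Fin (n + 1), (univ \ crun g).card = r + 1 := by
      intro g
      rw [card_sdiff_of_subset (subset_univ _), card_univ, Fintype.card_fin,
        PFaux.card_crun g (by omega)]
      omega
    have hsum2 : ∑ g : Fin s → Fin (n + 1), (univ \ crun g).card = (n + 1) ^ s * (r + 1) := by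
      rw [Finset.sum_congr rfl (fun g _ => hcard g), Finset.sum_const, card_univ,
        Fintype.card_fun, Fintype.card_fin, Fintype.card_fin, smul_eq_mul]
    have hsum3 : ∑ e : Fin (n + 1),
        (univ.filter fun g : Fin s → Fin (n + 1) => e ∉ crun g).card
        = (n + 1) * A.card := by
      rw [Finset.sum_congr rfl (fun e _ => PFaux.card_rot e), Finset.sum_const, card_univ,
        Fintype.card_fin, smul_eq_mul]
    have hpow : (n + 1) ^ s = (n + 1) * (n + 1) ^ (s - 1) := by
      conv_lhs => rw [show s = (s - 1) + 1 by omega]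
      rw [pow_succ]
      ring
    have hkey : (n + 1) * A.card = (n + 1) * ((r + 1) * (n + 1) ^ (s - 1)) := by
      rw [← hsum3, hsum1, hsum2, hpow]
      ring
    have hAcard : A.card = (r + 1) * (n + 1) ^ (s - 1) :=
      Nat.eq_of_mul_eq_mul_left (by omega) hkey
    rw [PFaux.cp_eq_A, ← hA, hAcard]
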